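/- Let G be a graph with connected components G_1,…,G_k, where G_a has strong separation dimension p_a. Then G has strong separation dimension at most max{p_1,…,p_k,2}; moreover there is a strongly separating representation of that size in which each ordering places the components in consecutive blocks, ordered either as V(G_1),…,V(G_k) or as V(G_k),…,V(G_1). -/
import Mathlib


/-- Disjoint edges `vw` and `xy` are separated in the ordering given by an injective
function `f` if all endpoints of one precede all endpoints of the other. -/
def Separates {V : Type*} (f : V → ℕ) (v w x y : V) : Prop :=
  (f v < f x ∧ f v < f y ∧ f w < f x ∧ f w < f y) ∨
  (f x < f v ∧ f x < f w ∧ f y < f v ∧ f y < f w)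

/-- `f` is a separating representation of `G`: a family of linear orderings of `V(G)`
(injective functions to `ℕ`) such that every pair of disjoint edges is separated in
some ordering. -/
def IsSepRep {V : Type*} (G : SimpleGraph V) {k : ℕ} (f : Fin k → V → ℕ) : Prop :=
  (∀ i, Function.Injective (f i)) ∧
  ∀ ⦃v w x y : V⦄, G.Adj v w → G.Adj x y → v ≠ x → v ≠ y → w ≠ x → w ≠ y →
    ∃ i, Separates (f i) v w x y

/-- `f` is a strongly separating representation of `G`: separating, and in addition for
every edge `vw` and vertex `x ∉ {v,w}` some ordering has `x` before both `v,w` and some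
ordering has `x` after both `v,w`. -/
def IsStrongSepRep {V : Type*} (G : SimpleGraph V) {k : ℕ} (f : Fin k → V → ℕ) : Prop :=
  IsSepRep G f ∧
  ∀ ⦃v w x : V⦄, G.Adj v w → x ≠ v → x ≠ w →
    (∃ i, f i x < f i v ∧ f i x < f i w) ∧ (∃ j, f j v < f j x ∧ f j w < f j x)

/-- The separation dimension of `G`: the minimum size of a (nonempty) separating
representation of `G`. -/
noncomputable def sepDim {V : Type*} (G : SimpleGraph V) : ℕ :=
  sInf {k | 1 ≤ k ∧ ∃ f : Fin k → V → ℕ, IsSepRep G f}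

/-- The strong separation dimension of `G`: the minimum size of a (nonempty) strongly
separating representation of `G`. -/
noncomputable def strongSepDim {V : Type*} (G : SimpleGraph V) : ℕ :=
  sInf {k | 1 ≤ k ∧ ∃ f : Fin k → V → ℕ, IsStrongSepRep G f}

/-- Let `G` be a graph whose connected components are enumerated (injectively) by
`idx : G.ConnectedComponent → ℕ`. Then the strong separation dimension of `G` is at most
the maximum of `2` and the strong separation dimensions of its components; moreover there
is a strongly separating representation of that size in which every ordering places the
components in consecutive blocks, ordered according to `idx` or its reverse. -/

private lemma block_lt {n a b r s : ℕ} (hab : a < b) (hr : r < n) : n * a + r < n * b + s := by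
  have he : n * (a + 1) = n * a + n := by ring
  have : n * a + r < n * (a + 1) := by omega
  have h2 : n * (a + 1) ≤ n * b := Nat.mul_le_mul_left n hab
  omega

private lemma block_eq {n a b r s : ℕ} (hr : r < n) (hs : s < n) (h : n * a + r = n * b + s) :
    a = b ∧ r = s := by
  have ha : (n * a + r) / n = a := by
    rw [Nat.mul_add_div (by omega), Nat.div_eq_of_lt hr]; omega
  have hb : (n * b + s) / n = b := by
    rw [Nat.mul_add_div (by omega), Nat.div_eq_of_lt hs]; omega
  have : a = b := by rw [← ha, ← hb, h]
  subst this
  omega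

noncomputable def rk {V : Type*} [Fintype V] (s : Set V) (g : s → ℕ) (v : V) : ℕ :=
  {u : V | ∃ (hu : u ∈ s) (hv : v ∈ s), g ⟨u, hu⟩ < g ⟨v, hv⟩}.ncard

lemma rk_lt {V : Type*} [Fintype V] (s : Set V) (g : s → ℕ) (v : V) :
    rk s g v < Fintype.card V := by
  rw [rk, ← Nat.card_eq_fintype_card, ← Set.ncard_univ]
  apply Set.ncard_lt_ncard _ Set.finite_univ
  constructor
  · exact Set.subset_univ _
  · intro h
    obtain ⟨_, _, hlt⟩ := h (Set.mem_univ v)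
    exact lt_irrefl _ hlt

lemma rk_lt_rk {V : Type*} [Fintype V] {s : Set V} (g : s → ℕ) {u v : V}
    (hu : u ∈ s) (hv : v ∈ s) (h : g ⟨u, hu⟩ < g ⟨v, hv⟩) : rk s g u < rk s g v := by
  rw [rk, rk]
  apply Set.ncard_lt_ncard _ (Set.toFinite _)
  constructor
  · rintro w ⟨hw, _, hlt⟩
    exact ⟨hw, hv, lt_trans hlt h⟩
  · intro hsub
    obtain ⟨_, _, hlt⟩ := hsub ⟨hu, hv, h⟩
    exact lt_irrefl _ hlt

lemma rk_inj {V : Type*} [Fintype V] {s : Set V} {g : s → ℕ} (hg : Function.Injective g)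
    {u v : V} (hu : u ∈ s) (hv : v ∈ s) (h : rk s g u = rk s g v) : u = v := by
  rcases lt_trichotomy (g ⟨u, hu⟩) (g ⟨v, hv⟩) with hlt | heq | hlt
  · exact absurd h (Nat.ne_of_lt (rk_lt_rk g hu hv hlt))
  · exact congrArg Subtype.val (hg heq)
  · exact absurd h.symm (Nat.ne_of_lt (rk_lt_rk g hv hu hlt))

/-- Every finite graph has some strongly separating representation. -/
lemma exists_strongSepRep {W : Type*} [Finite W] (H : SimpleGraph W) :
    ∃ (k : ℕ) (f : Fin k → W → ℕ), 1 ≤ k ∧ IsStrongSepRep H f := by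
  classical
  haveI : Fintype W := Fintype.ofFinite W
  let e : W ≃ Fin (Fintype.card W) := Fintype.equivFin W
  let I := (W × W) ⊕ (W ⊕ W)
  let F : I → W → ℕ := fun z u =>
    match z with
    | Sum.inl (v, w) => if u = v then 0 else if u = w then 1 else (e u : ℕ) + 2
    | Sum.inr (Sum.inl x) => if u = x then 0 else (e u : ℕ) + 1
    | Sum.inr (Sum.inr x) => if u = x then Fintype.card W else (e u : ℕ)
  have hFinj : ∀ z, Function.Injective (F z) := by
    intro z a b hab
    have ha := (e a).isLt
    have hb := (e b).isLt
    rcases z with (⟨v, w⟩ | x | x) <;> simp only [F] at hab <;> split_ifs at hab <;>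
      first
        | rfl
        | omega
        | (subst_vars; rfl)
        | exact e.injective (Fin.val_injective (by omega))
  let k := Fintype.card I + 1
  let eI := Fintype.equivFin I
  let f : Fin k → W → ℕ := fun i u =>
    if h : (i : ℕ) < Fintype.card I then F (eI.symm ⟨i, h⟩) u else (e u : ℕ)
  have hfF : ∀ z : I, f ⟨eI z, Nat.lt_succ_of_lt (eI z).2⟩ = F z := by
    intro z
    funext u
    simp only [f]
    rw [dif_pos (eI z).2]
    congr 1
    rw [show (⟨((eI z : Fin (Fintype.card I)) : ℕ), (eI z).2⟩ : Fin (Fintype.card I)) = eI z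
        from Fin.ext rfl]
    exact eI.symm_apply_apply z
  refine ⟨k, f, Nat.le_add_left 1 _, ⟨⟨?_, ?_⟩, ?_⟩⟩
  · intro i
    simp only [f]
    split_ifs with h
    · exact hFinj _
    · exact fun a b hab => e.injective (Fin.val_injective hab)
  · intro v w x y hvw hxy hvx hvy hwx hwy
    refine ⟨⟨eI (Sum.inl (v, w)), Nat.lt_succ_of_lt (eI _).2⟩, ?_⟩
    rw [hfF (Sum.inl (v, w))]
    left
    simp only [F, if_pos rfl, eq_self_iff_true, if_true]
    simp only [if_neg hvw.ne', if_neg (Ne.symm hvx), if_neg (Ne.symm hvy),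
      if_neg (Ne.symm hwx), if_neg (Ne.symm hwy)]
    omega
  · intro v w x hvw hxv hxw
    constructor
    · refine ⟨⟨eI (Sum.inr (Sum.inl x)), Nat.lt_succ_of_lt (eI _).2⟩, ?_⟩
      rw [hfF (Sum.inr (Sum.inl x))]
      simp only [F, if_pos rfl, eq_self_iff_true, if_true]
      simp only [if_neg (Ne.symm hxv), if_neg (Ne.symm hxw)]
      omega
    · refine ⟨⟨eI (Sum.inr (Sum.inr x)), Nat.lt_succ_of_lt (eI _).2⟩, ?_⟩
      rw [hfF (Sum.inr (Sum.inr x))]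
      simp only [F, if_pos rfl, eq_self_iff_true, if_true]
      simp only [if_neg (Ne.symm hxv), if_neg (Ne.symm hxw)]
      exact ⟨(e v).2, (e w).2⟩

theorem strongSepDim_components {V : Type*} [Fintype V] (G : SimpleGraph V)
    (idx : G.ConnectedComponent → ℕ) (hidx : Function.Injective idx) :
    strongSepDim G ≤ max 2 (⨆ c : G.ConnectedComponent, strongSepDim (G.induce c.supp)) ∧
    ∃ (m : ℕ) (f : Fin m → V → ℕ), 1 ≤ m ∧
      m ≤ max 2 (⨆ c : G.ConnectedComponent, strongSepDim (G.induce c.supp)) ∧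
      IsStrongSepRep G f ∧
      ∀ i : Fin m,
        (∀ v w : V, idx (G.connectedComponentMk v) < idx (G.connectedComponentMk w) →
          f i v < f i w) ∨
        (∀ v w : V, idx (G.connectedComponentMk v) < idx (G.connectedComponentMk w) →
          f i w < f i v) := by
  classical
  set m := max 2 (⨆ c : G.ConnectedComponent, strongSepDim (G.induce c.supp)) with hm
  set cmp : V → G.ConnectedComponent := fun v => G.connectedComponentMk v with hcmp
  have hne : ∀ c : G.ConnectedComponent,
      {k | 1 ≤ k ∧ ∃ f : Fin k → ↥c.supp → ℕ, IsStrongSepRep (G.induce c.supp) f}.Nonempty := by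
    intro c
    obtain ⟨k, f, hk, hf⟩ := exists_strongSepRep (G.induce c.supp)
    exact ⟨k, hk, f, hf⟩
  have hmem : ∀ c : G.ConnectedComponent, 1 ≤ strongSepDim (G.induce c.supp) ∧
      ∃ f : Fin (strongSepDim (G.induce c.supp)) → ↥c.supp → ℕ,
        IsStrongSepRep (G.induce c.supp) f := fun c => Nat.sInf_mem (hne c)
  choose hp1 g hg using hmem
  have hpm : ∀ c : G.ConnectedComponent, strongSepDim (G.induce c.supp) ≤ m := fun c =>
    le_trans (le_ciSup (f := fun c : G.ConnectedComponent => strongSepDim (G.induce c.supp))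
      (Set.Finite.bddAbove (Set.finite_range _)) c) (le_max_right _ _)
  have hm2 : 2 ≤ m := le_max_left _ _
  set M := Finset.univ.sup (fun v : V => idx (cmp v)) with hMdef
  have hMle : ∀ v : V, idx (cmp v) ≤ M := fun v => Finset.le_sup (f := fun v : V => idx (cmp v)) (Finset.mem_univ v)
  have hvsupp : ∀ v : V, v ∈ (cmp v).supp := fun v => rfl
  set F : Fin m → V → ℕ := fun i v =>
    Fintype.card V * (if (i : ℕ) = 1 then M - idx (cmp v) else idx (cmp v)) +
      rk (cmp v).supp
        (g (cmp v) ⟨(i : ℕ) % strongSepDim (G.induce (cmp v).supp),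
          Nat.mod_lt _ (hp1 (cmp v))⟩) v
    with hF
  -- ordering across blocks
  have hFlt : ∀ (i : Fin m) (v w : V), idx (cmp v) < idx (cmp w) →
      (((i : ℕ) ≠ 1 → F i v < F i w) ∧ ((i : ℕ) = 1 → F i w < F i v)) := by
    intro i v w h
    have h1 := hMle v
    have h2 := hMle w
    constructor <;> intro hi <;> simp only [hF] <;>
      [rw [if_neg hi, if_neg hi]; rw [if_pos hi, if_pos hi]] <;>
      exact block_lt (by omega) (rk_lt _ _ _)
  -- ordering within a block
  have hFsame : ∀ (i : Fin m) (c : G.ConnectedComponent)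
      (j : Fin (strongSepDim (G.induce c.supp))),
      (i : ℕ) % strongSepDim (G.induce c.supp) = (j : ℕ) →
      ∀ (v w : V) (hv : v ∈ c.supp) (hw : w ∈ c.supp),
      g c j ⟨v, hv⟩ < g c j ⟨w, hw⟩ → F i v < F i w := by
    intro i c j hj v w hv hw hlt
    have hj' : j = ⟨(i : ℕ) % strongSepDim (G.induce c.supp), Nat.mod_lt _ (hp1 c)⟩ :=
      Fin.ext hj.symm
    subst hj'
    have hcv : cmp v = c := (SimpleGraph.ConnectedComponent.mem_supp_iff c v).1 hv
    have hcw : cmp w = c := (SimpleGraph.ConnectedComponent.mem_supp_iff c w).1 hw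
    subst hcv
    simp only [hF]
    rw [hcw]
    exact Nat.add_lt_add_left (rk_lt_rk _ hv hw hlt) _
  -- injectivity
  have hFinj : ∀ i, Function.Injective (F i) := by
    intro i a b hab
    simp only [hF] at hab
    obtain ⟨hblk, hr⟩ := block_eq (rk_lt _ _ _) (rk_lt _ _ _) hab
    have hc : cmp a = cmp b := by
      apply hidx
      have h1 := hMle a
      have h2 := hMle b
      by_cases hi : (i : ℕ) = 1
      · rw [if_pos hi, if_pos hi] at hblk; omega
      · rw [if_neg hi, if_neg hi] at hblk; omega
    rw [hc] at hr
    have ha : a ∈ (cmp b).supp := (SimpleGraph.ConnectedComponent.mem_supp_iff _ a).2 hc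
    exact rk_inj ((hg (cmp b)).1.1 _) ha (hvsupp b) hr
  -- the representation is strongly separating
  have hrep : IsStrongSepRep G F := by
    refine ⟨⟨hFinj, ?_⟩, ?_⟩
    · intro v w x y hvw hxy hvx hvy hwx hwy
      have hcvw : cmp v = cmp w := SimpleGraph.ConnectedComponent.sound hvw.reachable
      have hcxy : cmp x = cmp y := SimpleGraph.ConnectedComponent.sound hxy.reachable
      by_cases hcc : cmp v = cmp x
      · -- same component
        have hv : v ∈ (cmp v).supp := hvsupp v
        have hw : w ∈ (cmp v).supp :=
          (SimpleGraph.ConnectedComponent.mem_supp_iff _ w).2 hcvw.symm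
        have hx : x ∈ (cmp v).supp :=
          (SimpleGraph.ConnectedComponent.mem_supp_iff _ x).2 hcc.symm
        have hy : y ∈ (cmp v).supp :=
          (SimpleGraph.ConnectedComponent.mem_supp_iff _ y).2 (hcxy ▸ hcc).symm
        have hadj1 : (G.induce (cmp v).supp).Adj ⟨v, hv⟩ ⟨w, hw⟩ := hvw
        have hadj2 : (G.induce (cmp v).supp).Adj ⟨x, hx⟩ ⟨y, hy⟩ := hxy
        obtain ⟨j, hsep⟩ := (hg (cmp v)).1.2 hadj1 hadj2
          (fun h => hvx (congrArg Subtype.val h)) (fun h => hvy (congrArg Subtype.val h))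
          (fun h => hwx (congrArg Subtype.val h)) (fun h => hwy (congrArg Subtype.val h))
        refine ⟨⟨(j : ℕ), lt_of_lt_of_le j.2 (hpm (cmp v))⟩, ?_⟩
        have hmod : ((⟨(j : ℕ), lt_of_lt_of_le j.2 (hpm (cmp v))⟩ : Fin m) : ℕ) %
            strongSepDim (G.induce (cmp v).supp) = (j : ℕ) := Nat.mod_eq_of_lt j.2
        rcases hsep with ⟨h1, h2, h3, h4⟩ | ⟨h1, h2, h3, h4⟩
        · exact Or.inl ⟨hFsame _ _ j hmod v x hv hx h1, hFsame _ _ j hmod v y hv hy h2,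
            hFsame _ _ j hmod w x hw hx h3, hFsame _ _ j hmod w y hw hy h4⟩
        · exact Or.inr ⟨hFsame _ _ j hmod x v hx hv h1, hFsame _ _ j hmod x w hx hw h2,
            hFsame _ _ j hmod y v hy hv h3, hFsame _ _ j hmod y w hy hw h4⟩
      · -- different components: any non-reversed ordering separates; use ordering 0
        have e1 : idx (cmp w) = idx (cmp v) := by rw [hcvw]
        have e2 : idx (cmp y) = idx (cmp x) := by rw [hcxy]
        have hne' : idx (cmp v) ≠ idx (cmp x) := fun h => hcc (hidx h)
        have i0 : Fin m := ⟨0, by omega⟩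
        refine ⟨⟨0, by omega⟩, ?_⟩
        have h0 : ((⟨0, by omega⟩ : Fin m) : ℕ) ≠ 1 := by simp
        rcases Nat.lt_or_ge (idx (cmp v)) (idx (cmp x)) with hlt | hge
        · exact Or.inl ⟨(hFlt _ v x (by omega)).1 h0, (hFlt _ v y (by omega)).1 h0,
            (hFlt _ w x (by omega)).1 h0, (hFlt _ w y (by omega)).1 h0⟩
        · exact Or.inr ⟨(hFlt _ x v (by omega)).1 h0, (hFlt _ x w (by omega)).1 h0,
            (hFlt _ y v (by omega)).1 h0, (hFlt _ y w (by omega)).1 h0⟩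
    · intro v w x hvw hxv hxw
      have hcvw : cmp v = cmp w := SimpleGraph.ConnectedComponent.sound hvw.reachable
      by_cases hcc : cmp x = cmp v
      · -- same component
        have hv : v ∈ (cmp v).supp := hvsupp v
        have hw : w ∈ (cmp v).supp :=
          (SimpleGraph.ConnectedComponent.mem_supp_iff _ w).2 hcvw.symm
        have hx : x ∈ (cmp v).supp :=
          (SimpleGraph.ConnectedComponent.mem_supp_iff _ x).2 hcc
        have hadj1 : (G.induce (cmp v).supp).Adj ⟨v, hv⟩ ⟨w, hw⟩ := hvw
        obtain ⟨⟨j, hj1, hj2⟩, ⟨j', hj1', hj2'⟩⟩ := (hg (cmp v)).2 (x := ⟨x, hx⟩) hadj1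
          (fun h => hxv (congrArg Subtype.val h)) (fun h => hxw (congrArg Subtype.val h))
        constructor
        · refine ⟨⟨(j : ℕ), lt_of_lt_of_le j.2 (hpm (cmp v))⟩, ?_⟩
          have hmod : ((⟨(j : ℕ), lt_of_lt_of_le j.2 (hpm (cmp v))⟩ : Fin m) : ℕ) %
              strongSepDim (G.induce (cmp v).supp) = (j : ℕ) := Nat.mod_eq_of_lt j.2
          exact ⟨hFsame _ _ j hmod x v hx hv hj1, hFsame _ _ j hmod x w hx hw hj2⟩
        · refine ⟨⟨(j' : ℕ), lt_of_lt_of_le j'.2 (hpm (cmp v))⟩, ?_⟩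
          have hmod : ((⟨(j' : ℕ), lt_of_lt_of_le j'.2 (hpm (cmp v))⟩ : Fin m) : ℕ) %
              strongSepDim (G.induce (cmp v).supp) = (j' : ℕ) := Nat.mod_eq_of_lt j'.2
          exact ⟨hFsame _ _ j' hmod v x hv hx hj1', hFsame _ _ j' hmod w x hw hx hj2'⟩
      · -- x in a different component: use orderings 0 and 1
        have e1 : idx (cmp w) = idx (cmp v) := by rw [hcvw]
        have hne' : idx (cmp x) ≠ idx (cmp v) := fun h => hcc (hidx h)
        have h0 : ((⟨0, by omega⟩ : Fin m) : ℕ) ≠ 1 := by simp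
        have h1 : ((⟨1, by omega⟩ : Fin m) : ℕ) = 1 := rfl
        rcases Nat.lt_or_ge (idx (cmp x)) (idx (cmp v)) with hlt | hge
        · exact ⟨⟨⟨0, by omega⟩, (hFlt _ x v (by omega)).1 h0, (hFlt _ x w (by omega)).1 h0⟩,
            ⟨⟨1, by omega⟩, (hFlt _ x v (by omega)).2 h1, (hFlt _ x w (by omega)).2 h1⟩⟩
        · exact ⟨⟨⟨1, by omega⟩, (hFlt _ v x (by omega)).2 h1, (hFlt _ w x (by omega)).2 h1⟩,
            ⟨⟨0, by omega⟩, (hFlt _ v x (by omega)).1 h0, (hFlt _ w x (by omega)).1 h0⟩⟩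
  -- the block condition
  have hblocks : ∀ i : Fin m,
      (∀ v w : V, idx (cmp v) < idx (cmp w) → F i v < F i w) ∨
      (∀ v w : V, idx (cmp v) < idx (cmp w) → F i w < F i v) := by
    intro i
    by_cases hi : (i : ℕ) = 1
    · exact Or.inr fun v w h => (hFlt i v w h).2 hi
    · exact Or.inl fun v w h => (hFlt i v w h).1 hi
  exact ⟨Nat.sInf_le ⟨by omega, F, hrep⟩, m, F, by omega, le_refl m, hrep, hblocks⟩
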